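/- Let G be a split graph with a fixed partition of its vertex set into a clique C and an independent set I, and let G* be the bipartite graph obtained from G by deleting all edges within C. Then G has Dilworth number at most 2 if and only if G* is a bichain graph (each part of the bipartition of G* partitions into at most two chains). -/

import Mathlib

open SimpleGraph

private lemma key_no_odd {X W : Type*} (Y : X → Set W) (H : SimpleGraph X)
    (Q : X → X → Prop)
    (hQt : ∀ a b c, Q a b → Q b c → Q a c)
    (hAQ : ∀ a b, H.Adj a b → Q a b)
    (hQA : ∀ a b, Q a b → ¬ Y a ⊆ Y b → ¬ Y b ⊆ Y a → H.Adj a b)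
    (hInc : ∀ a b, H.Adj a b → ¬ Y a ⊆ Y b)
    (htri : ∀ a b c, H.Adj a b → H.Adj b c → H.Adj a c → False) :
    ∀ n, Odd n → ∀ x : ℕ → X, x n = x 0 → (∀ i < n, H.Adj (x i) (x (i + 1))) → False := by
  intro n
  induction n using Nat.strong_induction_on with
  | _ n IH =>
  intro hodd x hx hadj
  rcases Nat.lt_or_ge n 5 with h5 | h5
  · have hodd' := Nat.odd_iff.mp hodd
    interval_cases n
    · simp at hodd'
    · have h := hadj 0 (by norm_num)
      rw [hx] at h
      exact H.loopless.irrefl _ h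
    · simp at hodd'
    · have a01 := hadj 0 (by norm_num)
      have a12 := hadj 1 (by norm_num)
      have a23 := hadj 2 (by norm_num)
      rw [hx] at a23
      exact htri _ _ _ a01 a12 a23.symm
    · simp at hodd'
  · have hn0 : 0 < n := by omega
    have hmodsucc : ∀ a : ℕ, (a + 1) % n = (a % n + 1) % n := by
      intro a
      conv_lhs => rw [Nat.add_mod]
      rw [Nat.mod_eq_of_lt (show 1 < n by omega)]
    have hadj' : ∀ m, m < n → H.Adj (x m) (x ((m + 1) % n)) := by
      intro m hm
      rcases eq_or_lt_of_le (Nat.succ_le_of_lt hm) with he | hl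
      · have he' : m + 1 = n := he
        rw [he', Nat.mod_self, ← hx, ← he']
        exact hadj m hm
      · rw [Nat.mod_eq_of_lt hl]
        exact hadj m hm
    -- no chords at even "distance" in [2, n-2]
    have noChord : ∀ i d, 2 ≤ d → d ≤ n - 2 → i + d ≤ n → ¬ H.Adj (x i) (x (i + d)) := by
      intro i d h2 hd hin hA
      have hiltn : i < n := by omega
      have hadjx' : ∀ k, k < n → H.Adj (x ((k + i) % n)) (x ((k + 1 + i) % n)) := by
        intro k hk
        have e : (k + 1 + i) % n = ((k + i) % n + 1) % n := by
          rw [show k + 1 + i = (k + i) + 1 by ring, hmodsucc]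
        rw [e]
        exact hadj' ((k + i) % n) (Nat.mod_lt _ hn0)
      have ed : x ((d + i) % n) = x (i + d) := by
        rcases eq_or_lt_of_le hin with he | hl
        · rw [show d + i = n by omega, Nat.mod_self, ← hx, he]
        · rw [show (d + i) % n = i + d by rw [Nat.mod_eq_of_lt (by omega)]; ring]
      rcases Nat.even_or_odd d with hde | hdo
      · -- inner closed walk of odd length d+1
        apply IH (d + 1) (by omega) (Even.add_one hde)
          (fun k => if k ≤ d then x ((k + i) % n) else x i)
        · simp [show ¬ (d + 1 ≤ d) by omega, Nat.mod_eq_of_lt hiltn]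
        · intro k hk
          rcases Nat.lt_or_ge k d with hkd | hkd
          · simp only [if_pos (le_of_lt hkd), if_pos (Nat.succ_le_of_lt hkd)]
            exact hadjx' k (by omega)
          · have hkeq : k = d := by omega
            subst hkeq
            simp only [if_pos (le_refl k), if_neg (show ¬ (k + 1 ≤ k) by omega)]
            rw [ed]
            exact hA.symm
      · -- outer closed walk of odd length n - d + 1
        apply IH (n - d + 1) (by omega) (Even.add_one (Nat.Odd.sub_odd hodd hdo))
          (fun k => if k ≤ n - d then x ((d + k + i) % n) else x ((d + i) % n))
        · simp [show ¬ (n - d + 1 ≤ n - d) by omega]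
        · intro k hk
          rcases Nat.lt_or_ge k (n - d) with hkd | hkd
          · simp only [if_pos (le_of_lt hkd), if_pos (Nat.succ_le_of_lt hkd)]
            have := hadjx' (d + k) (by omega)
            rw [show d + k + 1 + i = d + (k + 1) + i by ring] at this
            exact this
          · have hkeq : k = n - d := by omega
            subst hkeq
            simp only [if_pos (le_refl (n - d)), if_neg (show ¬ (n - d + 1 ≤ n - d) by omega)]
            have e1 : (d + (n - d) + i) % n = i := by
              rw [show d + (n - d) + i = n + i by omega, Nat.add_mod_left,
                Nat.mod_eq_of_lt hiltn]
            rw [e1, ed]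
            exact hA
    -- all vertices along the walk are pairwise Q-related
    have hQwalk : ∀ i j, i < j → j ≤ n → Q (x i) (x j) := by
      intro i j hij
      induction j, hij using Nat.le_induction with
      | base => intro h; exact hAQ _ _ (hadj i (by omega))
      | succ j hj IHj =>
        intro h
        exact hQt _ _ _ (IHj (by omega)) (hAQ _ _ (hadj j (by omega)))
    have comp : ∀ i j, i + 2 ≤ j → j ≤ n → j ≤ i + (n - 2) →
        Y (x i) ⊆ Y (x j) ∨ Y (x j) ⊆ Y (x i) := by
      intro i j h2 hjn hup
      by_contra hc
      push_neg at hc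
      refine noChord i (j - i) (by omega) (by omega) (by omega) ?_
      rw [show i + (j - i) = j by omega]
      exact hQA _ _ (hQwalk i j (by omega) hjn) hc.1 hc.2
    have inc : ∀ i, i < n → ¬ (Y (x i) ⊆ Y (x (i + 1))) ∧ ¬ (Y (x (i + 1)) ⊆ Y (x i)) :=
      fun i hi => ⟨hInc _ _ (hadj i hi), hInc _ _ (hadj i hi).symm⟩
    -- constant sign along a run
    have chain : ∀ b i, b + 2 ≤ i → i ≤ b + (n - 2) → i ≤ n →
        ((Y (x i) ⊆ Y (x b)) ↔ (Y (x (b + 2)) ⊆ Y (x b))) := by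
      intro b i h1
      induction i, h1 using Nat.le_induction with
      | base => intro _ _; exact Iff.rfl
      | succ i hi IHi =>
        intro h2 h3
        have step : (Y (x (i + 1)) ⊆ Y (x b)) ↔ (Y (x i) ⊆ Y (x b)) := by
          constructor
          · intro hup
            by_contra hni
            rcases comp b i (by omega) (by omega) (by omega) with h | h
            · exact (inc i (by omega)).2 (hup.trans h)
            · exact hni h
          · intro hdown
            by_contra hni
            rcases comp b (i + 1) (by omega) (by omega) (by omega) with h | h
            · exact (inc i (by omega)).1 (hdown.trans h)
            · exact hni h
        rw [step]
        exact IHi (by omega) (by omega)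
    -- endgame
    have i01 := inc 0 (by omega)
    have i12 := inc 1 (by omega)
    have i23 := inc 2 (by omega)
    by_cases hP2 : Y (x 2) ⊆ Y (x 0)
    · have h03 : Y (x 3) ⊆ Y (x 0) := (chain 0 3 (by omega) (by omega) (by omega)).mpr hP2
      have h02 : ¬ (Y (x 0) ⊆ Y (x 2)) := by
        intro hc
        rcases comp 0 3 (by omega) (by omega) (by omega) with h | h
        · exact i23.1 (hP2.trans h)
        · exact i23.2 (h.trans hc)
      have hr : ¬ Y (x 4) ⊆ Y (x 2) := by
        intro hc
        have h' := (chain 2 n (by omega) (by omega) (le_refl n)).mpr hc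
        rw [hx] at h'
        exact h02 h'
      have hn12 : Y (x 2) ⊆ Y (x (n - 1)) := by
        have hnot : ¬ Y (x (n - 1)) ⊆ Y (x 2) := fun hc =>
          hr ((chain 2 (n - 1) (by omega) (by omega) (by omega)).mp hc)
        rcases comp 2 (n - 1) (by omega) (by omega) (by omega) with h | h
        · exact h
        · exact absurd h hnot
      by_cases hQ3 : Y (x 3) ⊆ Y (x 1)
      · have h' := (chain 1 (n - 1) (by omega) (by omega) (by omega)).mpr hQ3
        exact i12.2 (hn12.trans h')
      · have h13 : Y (x 1) ⊆ Y (x 3) := by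
          rcases comp 1 3 (by omega) (by omega) (by omega) with h | h
          · exact h
          · exact absurd h hQ3
        exact i01.2 (h13.trans h03)
    · have h02 : Y (x 0) ⊆ Y (x 2) := by
        rcases comp 0 2 (by omega) (by omega) (by omega) with h | h
        · exact h
        · exact absurd h hP2
      have h03 : Y (x 0) ⊆ Y (x 3) := by
        have hnot : ¬ Y (x 3) ⊆ Y (x 0) := fun hc =>
          hP2 ((chain 0 3 (by omega) (by omega) (by omega)).mp hc)
        rcases comp 0 3 (by omega) (by omega) (by omega) with h | h
        · exact h
        · exact absurd h hnot
      have hr4 : Y (x 4) ⊆ Y (x 2) := by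
        have hn2 : Y (x n) ⊆ Y (x 2) := by rw [hx]; exact h02
        exact (chain 2 n (by omega) (by omega) (le_refl n)).mp hn2
      have hn12 : Y (x (n - 1)) ⊆ Y (x 2) :=
        (chain 2 (n - 1) (by omega) (by omega) (by omega)).mpr hr4
      by_cases hQ3 : Y (x 3) ⊆ Y (x 1)
      · exact i01.1 (h03.trans hQ3)
      · have h1n1 : Y (x 1) ⊆ Y (x (n - 1)) := by
          have hnot : ¬ Y (x (n - 1)) ⊆ Y (x 1) := fun hc =>
            hQ3 ((chain 1 (n - 1) (by omega) (by omega) (by omega)).mp hc)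
          rcases comp 1 (n - 1) (by omega) (by omega) (by omega) with h | h
          · exact h
          · exact absurd h hnot
        exact i12.1 (h1n1.trans hn12)


/-- The bipartite graph `G*` obtained from a split graph `G` (with clique
given by `P = true` and independent set by `P = false`) by deleting all edges
inside the clique. -/
def removeCliqueEdges {V : Type*} (G : SimpleGraph V) (P : V → Bool) :
    SimpleGraph V where
  Adj a b := G.Adj a b ∧ ¬ (P a = true ∧ P b = true)
  symm := ⟨by rintro a b ⟨h1, h2⟩; exact ⟨h1.symm, by tauto⟩⟩
  loopless := ⟨fun a h => G.loopless.irrefl a h.1⟩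

/-- The Dilworth quasi-order on vertices: `x ⪯ y` iff `N(x) ⊆ N(y) ∪ {y}`. -/
def dilPre {V : Type*} (G : SimpleGraph V) (x y : V) : Prop :=
  G.neighborSet x ⊆ G.neighborSet y ∪ {y}

/-- let `G` be a split graph with a fixed partition into a
clique `C` (`P = true`) and an independent set `I` (`P = false`), and let
`G*` be obtained from `G` by deleting the edges inside `C`. Then `G` has
Dilworth number at most 2 (any three distinct vertices contain a
`⪯`-comparable pair) iff `G*` is a bichain graph (there is a two-colouring
of its vertices so that any two vertices in the same part of the bipartition
with the same colour have `G*`-neighbourhoods comparable by inclusion). -/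
theorem split_dilworth_iff_bichain {V : Type*} (G : SimpleGraph V)
    (P : V → Bool)
    (hclique : ∀ a b, a ≠ b → P a = true → P b = true → G.Adj a b)
    (hindep : ∀ a b, P a = false → P b = false → ¬ G.Adj a b) :
    (∀ x y z : V, x ≠ y → x ≠ z → y ≠ z →
        (dilPre G x y ∨ dilPre G y x ∨ dilPre G x z ∨ dilPre G z x ∨
         dilPre G y z ∨ dilPre G z y)) ↔
    ∃ f : V → Bool, ∀ u v : V, P u = P v → f u = f v →
      ((removeCliqueEdges G P).neighborSet u ⊆
          (removeCliqueEdges G P).neighborSet v ∨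
       (removeCliqueEdges G P).neighborSet v ⊆
          (removeCliqueEdges G P).neighborSet u) := by
  classical
  set Ns : V → Set V := fun u => (removeCliqueEdges G P).neighborSet u with hNs
  have memNs : ∀ u w, w ∈ Ns u ↔ (G.Adj u w ∧ ¬ (P u = true ∧ P w = true)) :=
    fun u w => Iff.rfl
  -- mixed pairs are always comparable
  have hMix : ∀ u v, P u = false → P v = true → dilPre G u v := by
    intro u v hu hv w hw
    have hadj : G.Adj u w := hw
    cases hPw : P w with
    | false => exact absurd hadj (hindep u w hu hPw)
    | true =>
      by_cases hwv : w = v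
      · exact Set.mem_union_right _ (Set.mem_singleton_iff.mpr hwv)
      · exact Set.mem_union_left _
          ((hclique v w (fun h' => hwv h'.symm) hv hPw).symm.symm)
  -- on the clique, dilPre coincides with `Ns`-inclusion
  have hTrue : ∀ u v, P u = true → P v = true → (dilPre G u v ↔ Ns u ⊆ Ns v) := by
    intro u v hu hv
    constructor
    · intro h w hw
      obtain ⟨haw, hnw⟩ := (memNs u w).mp hw
      have hPw : P w = false := by
        cases hPw : P w
        · rfl
        · exact absurd ⟨hu, hPw⟩ hnw
      have hmem : w ∈ G.neighborSet v ∪ {v} := h haw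
      rcases hmem with h1 | h1
      · exact (memNs v w).mpr ⟨h1, fun hc => by rw [hPw] at hc; simp at hc⟩
      · have hwv : w = v := h1
        rw [hwv, hv] at hPw
        simp at hPw
    · intro h w hw
      have haw : G.Adj u w := hw
      cases hPw : P w with
      | false =>
        have hmem : w ∈ Ns v := h ((memNs u w).mpr ⟨haw, by simp [hPw]⟩)
        exact Set.mem_union_left _ ((memNs v w).mp hmem).1
      | true =>
        by_cases hwv : w = v
        · exact Set.mem_union_right _ (Set.mem_singleton_iff.mpr hwv)
        · exact Set.mem_union_left _ (hclique v w (fun h' => hwv h'.symm) hv hPw)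
  -- on the independent set, dilPre coincides with `Ns`-inclusion
  have hFalse : ∀ u v, P u = false → P v = false → (dilPre G u v ↔ Ns u ⊆ Ns v) := by
    intro u v hu hv
    constructor
    · intro h w hw
      obtain ⟨haw, _⟩ := (memNs u w).mp hw
      have hmem : w ∈ G.neighborSet v ∪ {v} := h haw
      rcases hmem with h1 | h1
      · exact (memNs v w).mpr ⟨h1, by simp [hv]⟩
      · have hwv : w = v := h1
        rw [hwv] at haw
        exact absurd haw (hindep u v hu hv)
    · intro h w hw
      have haw : G.Adj u w := hw
      have hmem : w ∈ Ns v := h ((memNs u w).mpr ⟨haw, by simp [hu]⟩)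
      exact Set.mem_union_left _ ((memNs v w).mp hmem).1
  have hSame : ∀ u v, P u = P v → (dilPre G u v ↔ Ns u ⊆ Ns v) := by
    intro u v h
    cases hu : P u with
    | false => exact hFalse u v hu (by rw [← h, hu])
    | true => exact hTrue u v hu (by rw [← h, hu])
  constructor
  · -- forward direction
    intro hL
    set H : SimpleGraph V :=
      { Adj := fun a b => P a = P b ∧ ¬ Ns a ⊆ Ns b ∧ ¬ Ns b ⊆ Ns a
        symm := ⟨by rintro a b ⟨h1, h2, h3⟩; exact ⟨h1.symm, h3, h2⟩⟩
        loopless := ⟨fun a h => h.2.1 (subset_refl _)⟩ } with hH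
    have hHAdj : ∀ a b, H.Adj a b ↔ (P a = P b ∧ ¬ Ns a ⊆ Ns b ∧ ¬ Ns b ⊆ Ns a) :=
      fun a b => Iff.rfl
    have htri : ∀ a b c, H.Adj a b → H.Adj b c → H.Adj a c → False := by
      intro a b c hab hbc hac
      rcases hL a b c (H.ne_of_adj hab) (H.ne_of_adj hac) (H.ne_of_adj hbc) with
        h | h | h | h | h | h
      · exact hab.2.1 ((hSame a b hab.1).mp h)
      · exact hab.2.2 ((hSame b a hab.1.symm).mp h)
      · exact hac.2.1 ((hSame a c hac.1).mp h)
      · exact hac.2.2 ((hSame c a hac.1.symm).mp h)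
      · exact hbc.2.1 ((hSame b c hbc.1).mp h)
      · exact hbc.2.2 ((hSame c b hbc.1.symm).mp h)
    have hkey := key_no_odd Ns H (fun a b => P a = P b)
      (fun a b c h1 h2 => h1.trans h2) (fun a b h => h.1)
      (fun a b hq h1 h2 => ⟨hq, h1, h2⟩) (fun a b h => h.2.1) htri
    have hreach : ∀ v : V, H.Reachable (H.connectedComponentMk v).out v := by
      intro v
      exact SimpleGraph.ConnectedComponent.exact (Quot.out_eq _)
    let wk : ∀ v : V, H.Walk (H.connectedComponentMk v).out v := fun v => (hreach v).some
    refine ⟨fun v => decide (Odd (wk v).length), ?_⟩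
    intro u v hPuv hf
    by_contra hc
    push_neg at hc
    obtain ⟨h1, h2⟩ := hc
    have hadj : H.Adj u v := ⟨hPuv, h1, h2⟩
    have hcc : H.connectedComponentMk u = H.connectedComponentMk v :=
      SimpleGraph.ConnectedComponent.sound hadj.reachable
    have hout : (H.connectedComponentMk v).out = (H.connectedComponentMk u).out := by
      rw [hcc]
    let w2 : H.Walk (H.connectedComponentMk u).out v := (wk v).copy hout rfl
    let cw : H.Walk u u :=
      (wk u).reverse.append (w2.append (SimpleGraph.Walk.cons hadj.symm SimpleGraph.Walk.nil))
    have hlen : cw.length = (wk u).length + ((wk v).length + 1) := by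
      simp [cw, w2, SimpleGraph.Walk.length_append, SimpleGraph.Walk.length_reverse,
        SimpleGraph.Walk.length_copy, SimpleGraph.Walk.length_cons,
        SimpleGraph.Walk.length_nil]
    have hpar : Odd (wk u).length ↔ Odd (wk v).length := by
      simpa using congrArg (fun b => b = true) hf
    have hoddcw : Odd cw.length := by
      rw [hlen, Nat.odd_iff] at *
      rw [Nat.odd_iff] at hpar
      omega
    exact hkey cw.length hoddcw cw.getVert
      (by rw [SimpleGraph.Walk.getVert_length, SimpleGraph.Walk.getVert_zero])
      (fun i hi => cw.adj_getVert_succ hi)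
  · -- backward direction
    rintro ⟨f, hf⟩ x y z hxy hxz hyz
    have pair : ∀ u v : V, P u ≠ P v → dilPre G u v ∨ dilPre G v u := by
      intro u v h
      cases hu : P u with
      | false =>
        cases hv : P v with
        | false => exact absurd (hu.trans hv.symm) h
        | true => exact Or.inl (hMix u v hu hv)
      | true =>
        cases hv : P v with
        | false => exact Or.inr (hMix v u hv hu)
        | true => exact absurd (hu.trans hv.symm) h
    have pair2 : ∀ u v : V, P u = P v → f u = f v → dilPre G u v ∨ dilPre G v u := by
      intro u v hp hfv
      rcases hf u v hp hfv with h | h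
      · exact Or.inl ((hSame u v hp).mpr h)
      · exact Or.inr ((hSame v u hp.symm).mpr h)
    by_cases hxy' : P x = P y
    · by_cases hxz' : P x = P z
      · have hyz' : P y = P z := hxy'.symm.trans hxz'
        have hbool : ∀ a b c : Bool, a = b ∨ a = c ∨ b = c := by decide
        rcases hbool (f x) (f y) (f z) with h | h | h
        · rcases pair2 x y hxy' h with h' | h'
          · exact Or.inl h'
          · exact Or.inr (Or.inl h')
        · rcases pair2 x z hxz' h with h' | h'
          · exact Or.inr (Or.inr (Or.inl h'))
          · exact Or.inr (Or.inr (Or.inr (Or.inl h')))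
        · rcases pair2 y z hyz' h with h' | h'
          · exact Or.inr (Or.inr (Or.inr (Or.inr (Or.inl h'))))
          · exact Or.inr (Or.inr (Or.inr (Or.inr (Or.inr h'))))
      · rcases pair x z hxz' with h' | h'
        · exact Or.inr (Or.inr (Or.inl h'))
        · exact Or.inr (Or.inr (Or.inr (Or.inl h')))
    · rcases pair x y hxy' with h' | h'
      · exact Or.inl h'
      · exact Or.inr (Or.inl h')
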